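/- Let S be a virtual network (a finite connected graph) with m edges and edge demands w : E(S) → {0,1}, and let G be a connected physical network on the same number of vertices with edge costs t : E(G) → {0,1}. Define edge capacities on G by c(e) = m if t(e) = 0 and c(e) = 0 if t(e) = 1. Then the following are equivalent: (i) there exists a bijection f from V(S) to V(G) such that for every edge uv of S with w(uv) = 1 the weighted shortest-path distance dist_t(f(u), f(v)) equals 0 (i.e., a cost-0 embedding exists); (ii) there exists a bijection f from V(S) to V(G) together with, for each edge uv of S, a path in G from f(u) to f(v), such that for every edge e of G the sum of w(uv) over all virtual edges uv whose assigned path traverses e is at most c(e). (This is the reduction lemma transferring NP-completeness of a wVNE variant with desired cost 0 to the corresponding cVNE variant.) -/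

import Mathlib

open Classical Finset

/-- The weighted shortest-path distance (with natural-number edge costs `t`):
the infimum over all walks from `u` to `v` of the total cost of their edges. -/
noncomputable def weightedDistNat {V : Type} (G : SimpleGraph V) (t : Sym2 V → ℕ)
    (u v : V) : ℕ :=
  sInf {x : ℕ | ∃ p : G.Walk u v, x = (p.edges.map t).sum}

/-- The reduction lemma transferring NP-completeness of a wVNE variant
with desired cost `0` to the corresponding cVNE variant.  `S` is a connected virtual
network with `{0,1}` edge demands `w` and `m` edges, `G` a connected physical network
on the same number of vertices with `{0,1}` edge costs `t`; capacities on `G` are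
`c e = m` if `t e = 0` and `c e = 0` if `t e = 1`.  Then a cost-0 embedding exists
(i): a bijection sending every demand-1 virtual edge to endpoints at weighted
distance `0`), iff a capacity-feasible embedding exists (ii): a bijection together
with a path in `G` for each virtual edge such that the load of every physical edge is
at most its capacity). -/
theorem wVNE_cost_zero_iff_cVNE_feasible {V W : Type} [Fintype V] [Fintype W]
    [DecidableEq V] [DecidableEq W]
    (S : SimpleGraph V) (G : SimpleGraph W) [DecidableRel S.Adj]
    (hcard : Fintype.card V = Fintype.card W)
    (hS : S.Connected) (hG : G.Connected)
    (w : Sym2 V → ℕ) (hw : ∀ e, w e = 0 ∨ w e = 1)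
    (t : Sym2 W → ℕ) (ht : ∀ e, t e = 0 ∨ t e = 1) :
    (∃ f : V ≃ W, ∀ u v : V, S.Adj u v → w s(u, v) = 1 →
        weightedDistNat G t (f u) (f v) = 0) ↔
    (∃ (f : V ≃ W) (P : Sym2 V → (x : W) × (y : W) × G.Walk x y),
      (∀ e ∈ S.edgeSet, ∃ u v : V, e = s(u, v) ∧
          (P e).1 = f u ∧ (P e).2.1 = f v ∧ (P e).2.2.IsPath) ∧
      ∀ ε ∈ G.edgeSet,
        (∑ e ∈ S.edgeFinset, if ε ∈ (P e).2.2.edges then w e else 0) ≤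
          (if t ε = 0 then S.edgeFinset.card else 0)) := by
  constructor
  · rintro ⟨f, hf⟩
    have hW : Nonempty W := hG.nonempty
    have key : ∀ e : Sym2 V, ∃ (x y : W) (p : G.Walk x y),
        e ∈ S.edgeSet → ∃ u v : V, e = s(u, v) ∧ x = f u ∧ y = f v ∧ p.IsPath ∧
          (w e = 1 → ∀ ε ∈ p.edges, t ε = 0) := by
      intro e
      induction e using Sym2.ind with
      | _ u v =>
        by_cases hadj : S.Adj u v
        · by_cases hw1 : w s(u, v) = 1
          · have h0 := hf u v hadj hw1
            rw [weightedDistNat, Nat.sInf_eq_zero] at h0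
            rcases h0 with h0 | h0
            · obtain ⟨p, hp⟩ := h0
              have hall : ∀ ε ∈ p.edges, t ε = 0 := by
                intro ε hε
                have h1 : t ε ≤ (p.edges.map t).sum :=
                  List.single_le_sum (fun x _ => Nat.zero_le x) _
                    (List.mem_map_of_mem (f := t) hε)
                omega
              refine ⟨f u, f v, p.toPath, fun _ => ⟨u, v, rfl, rfl, rfl,
                p.toPath.2, fun _ ε hε => hall ε (SimpleGraph.Walk.edges_toPath_subset p hε)⟩⟩
            · exact absurd h0 (Set.Nonempty.ne_empty
                ⟨((hG.preconnected (f u) (f v)).some.edges.map t).sum,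
                  (hG.preconnected (f u) (f v)).some, rfl⟩)
          · refine ⟨f u, f v, ((hG.preconnected (f u) (f v)).some).toPath,
              fun _ => ⟨u, v, rfl, rfl, rfl, Subtype.prop _, fun h => absurd h hw1⟩⟩
        · exact ⟨Classical.arbitrary W, Classical.arbitrary W, SimpleGraph.Walk.nil,
            fun he => absurd ((SimpleGraph.mem_edgeSet S).mp he) hadj⟩
    choose x y p hP using key
    refine ⟨f, fun e => ⟨x e, y e, p e⟩, fun e he => ?_, fun ε hε => ?_⟩
    · obtain ⟨u, v, h1, h2, h3, h4, _⟩ := hP e he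
      exact ⟨u, v, h1, h2, h3, h4⟩
    · by_cases htε : t ε = 0
      · rw [if_pos htε]
        calc (∑ e ∈ S.edgeFinset, if ε ∈ (p e).edges then w e else 0)
            ≤ ∑ _e ∈ S.edgeFinset, 1 := by
              refine Finset.sum_le_sum fun e _ => ?_
              rcases hw e with h | h <;> split <;> omega
          _ = S.edgeFinset.card := by simp
      · have ht1 : t ε = 1 := (ht ε).resolve_left htε
        rw [if_neg htε]
        refine le_of_eq (Finset.sum_eq_zero fun e he => ?_)
        split
        · rcases hw e with h | h
          · exact h
          · obtain ⟨u, v, _, _, _, _, hzero⟩ := hP e (SimpleGraph.mem_edgeFinset.mp he)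
            have := hzero h ε (by assumption)
            omega
        · rfl
  · rintro ⟨f, P, hP, hload⟩
    refine ⟨f, fun u v hadj hw1 => ?_⟩
    have he : s(u, v) ∈ S.edgeSet := hadj
    obtain ⟨u', v', heq, hx, hy, _⟩ := hP _ he
    have hall : ∀ ε ∈ (P s(u, v)).2.2.edges, t ε = 0 := by
      intro ε hε
      by_contra h
      have hεG : ε ∈ G.edgeSet := (P s(u, v)).2.2.edges_subset_edgeSet hε
      have hl := hload ε hεG
      rw [if_neg h] at hl
      have hzero := (Finset.sum_eq_zero_iff.mp (Nat.le_zero.mp hl)) s(u, v)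
        (SimpleGraph.mem_edgeFinset.mpr he)
      rw [if_pos hε, hw1] at hzero
      exact one_ne_zero hzero
    have hq : ∀ ε ∈ ((P s(u, v)).2.2.copy hx hy).edges, t ε = 0 := by
      intro ε hε
      exact hall ε (by rwa [SimpleGraph.Walk.edges_copy] at hε)
    rcases Sym2.eq_iff.mp heq with ⟨hu, hv⟩ | ⟨hu, hv⟩
    · subst hu; subst hv
      rw [weightedDistNat, Nat.sInf_eq_zero]
      left
      exact ⟨(P s(u, v)).2.2.copy hx hy, ((List.sum_eq_zero fun a ha => by
        obtain ⟨ε, hε, rfl⟩ := List.mem_map.mp ha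
        exact hq ε hε)).symm⟩
    · subst hu; subst hv
      rw [weightedDistNat, Nat.sInf_eq_zero]
      left
      refine ⟨((P s(u, v)).2.2.copy hx hy).reverse, ((List.sum_eq_zero fun a ha => ?_)).symm⟩
      obtain ⟨ε, hε, rfl⟩ := List.mem_map.mp ha
      rw [SimpleGraph.Walk.edges_reverse, List.mem_reverse] at hε
      exact hq ε hε
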